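/- Let X and Y be finite nonempty sets and R ⊆ X × Y. Let ε ∈ (0,1) and suppose there exist finite unions of rectangles P ⊆ R ⊆ Q with |Q| − |P| ≤ ε·|X|·|Y|, where P and Q are each unions of at most k rectangles. If |R| ≥ α·|X|·|Y| with α > ε, then there exist A ⊆ X and B ⊆ Y with A × B ⊆ R and |A|·|B| ≥ ((α − ε)/4^k)·|X|·|Y|. -/

import Mathlib

/-- A union of (at most) `k` rectangles, as a `Finset`. -/
def IsRectUnionK {X Y : Type*} [DecidableEq X] [DecidableEq Y]
    (k : ℕ) (P : Finset (X × Y)) : Prop :=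
  ∃ (A : Fin k → Finset X) (B : Fin k → Finset Y),
    P = Finset.univ.biUnion fun i => A i ×ˢ B i

theorem stmt_9 {X Y : Type*} [Fintype X] [Fintype Y] [DecidableEq X] [DecidableEq Y]
    [Nonempty X] [Nonempty Y]
    (R : Finset (X × Y)) (ε : ℝ) (hε0 : 0 < ε) (hε1 : ε < 1) (k : ℕ)
    (P Q : Finset (X × Y)) (hP : IsRectUnionK k P) (hQ : IsRectUnionK k Q)
    (hPR : P ⊆ R) (hRQ : R ⊆ Q)
    (hgap : (Q.card : ℝ) - P.card ≤ ε * Fintype.card X * Fintype.card Y)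
    (α : ℝ) (hα : ε < α)
    (hR : (R.card : ℝ) ≥ α * Fintype.card X * Fintype.card Y) :
    ∃ (A : Finset X) (B : Finset Y), (A ×ˢ B : Finset (X × Y)) ⊆ R ∧
      ((A.card : ℝ) * B.card ≥ ((α - ε) / 4 ^ k) * Fintype.card X * Fintype.card Y) := by
  obtain ⟨A, B, hPdef⟩ := hP
  -- the pattern ("atom") of a point
  let f : X × Y → (Fin k → Bool) × (Fin k → Bool) :=
    fun p => (fun i => decide (p.1 ∈ A i), fun i => decide (p.2 ∈ B i))
  have hfib : P.card =
      ∑ st : (Fin k → Bool) × (Fin k → Bool),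
        (P.filter fun p => f p = st).card :=
    Finset.card_eq_sum_card_fiberwise (fun x _ => Finset.mem_univ _)
  -- pick a largest fiber
  obtain ⟨st, -, hst⟩ := Finset.exists_max_image Finset.univ
    (fun st => (P.filter fun p => f p = st).card)
    ⟨(fun _ => true, fun _ => true), Finset.mem_univ _⟩
  have hσ : Fintype.card ((Fin k → Bool) × (Fin k → Bool)) = 4 ^ k := by
    simp only [Fintype.card_prod, Fintype.card_fun, Fintype.card_bool, Fintype.card_fin]
    rw [← mul_pow]
    norm_num
  have hPle : P.card ≤ 4 ^ k * (P.filter fun p => f p = st).card := by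
    calc P.card = ∑ st' : (Fin k → Bool) × (Fin k → Bool),
          (P.filter fun p => f p = st').card := hfib
      _ ≤ Finset.univ.card • (P.filter fun p => f p = st).card :=
          Finset.sum_le_card_nsmul _ _ _ (fun x _ => hst x (Finset.mem_univ x))
      _ = 4 ^ k * (P.filter fun p => f p = st).card := by
          rw [smul_eq_mul, Finset.card_univ, hσ]
  -- the atoms
  set Ax : Finset X := Finset.univ.filter (fun x => (fun i => decide (x ∈ A i)) = st.1) with hAx
  set By : Finset Y := Finset.univ.filter (fun y => (fun i => decide (y ∈ B i)) = st.2) with hBy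
  have hfibsub : (P.filter fun p => f p = st) ⊆ Ax ×ˢ By := by
    intro p hp
    rw [Finset.mem_filter] at hp
    rw [Finset.mem_product, hAx, hBy, Finset.mem_filter, Finset.mem_filter]
    exact ⟨⟨Finset.mem_univ _, by rw [← hp.2]⟩, ⟨Finset.mem_univ _, by rw [← hp.2]⟩⟩
  -- size bounds on P
  have hX0 : (0:ℝ) < Fintype.card X := by exact_mod_cast Fintype.card_pos
  have hY0 : (0:ℝ) < Fintype.card Y := by exact_mod_cast Fintype.card_pos
  have hRQ' : (R.card : ℝ) ≤ Q.card := by exact_mod_cast Finset.card_le_card hRQ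
  have hPbig : (α - ε) * Fintype.card X * Fintype.card Y ≤ (P.card : ℝ) := by nlinarith
  have hprod : (0:ℝ) < (α - ε) * Fintype.card X * Fintype.card Y :=
    mul_pos (mul_pos (sub_pos.2 hα) hX0) hY0
  have hPpos : 0 < P.card := by exact_mod_cast hprod.trans_le hPbig
  -- the fiber is nonempty; get a witness point
  have hfibne : (P.filter fun p => f p = st).Nonempty := by
    rw [← Finset.card_pos]
    rcases Nat.eq_zero_or_pos (P.filter fun p => f p = st).card with h | h
    · rw [h, mul_zero] at hPle; omega
    · exact h
  obtain ⟨p₀, hp₀⟩ := hfibne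
  rw [Finset.mem_filter] at hp₀
  obtain ⟨hp₀P, hp₀f⟩ := hp₀
  refine ⟨Ax, By, ?_, ?_⟩
  · -- Ax ×ˢ By ⊆ R
    intro q hq
    rw [Finset.mem_product, hAx, hBy, Finset.mem_filter, Finset.mem_filter] at hq
    have hp₀P' := hp₀P
    rw [hPdef, Finset.mem_biUnion] at hp₀P'
    obtain ⟨i, -, hi⟩ := hp₀P'
    rw [Finset.mem_product] at hi
    have h1 : st.1 i = true := by
      rw [← congrFun (congrArg Prod.fst hp₀f) i]; simpa [f] using hi.1
    have h2 : st.2 i = true := by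
      rw [← congrFun (congrArg Prod.snd hp₀f) i]; simpa [f] using hi.2
    have hq1 : q.1 ∈ A i := by
      have := congrFun hq.1.2 i; rw [h1] at this; simpa using this
    have hq2 : q.2 ∈ B i := by
      have := congrFun hq.2.2 i; rw [h2] at this; simpa using this
    apply hPR
    rw [hPdef, Finset.mem_biUnion]
    exact ⟨i, Finset.mem_univ _, Finset.mem_product.2 ⟨hq1, hq2⟩⟩
  · -- the size bound
    have hcard : (P.card : ℝ) ≤ 4 ^ k * (Ax.card * By.card) := by
      have : P.card ≤ 4 ^ k * (Ax.card * By.card) := by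
        calc P.card ≤ 4 ^ k * (P.filter fun p => f p = st).card := hPle
          _ ≤ 4 ^ k * (Ax ×ˢ By).card :=
              Nat.mul_le_mul_left _ (Finset.card_le_card hfibsub)
          _ = 4 ^ k * (Ax.card * By.card) := by rw [Finset.card_product]
      exact_mod_cast this
    have h4 : (0:ℝ) < 4 ^ k := by positivity
    rw [ge_iff_le, div_mul_eq_mul_div, div_mul_eq_mul_div, div_le_iff₀ h4]
    nlinarith
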